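/- Let A be a maximal antichain in a finite poset P which is not an antichain. If X = D(A) and Y = U(A) are both antichains with |X| = s and |Y| = s + t (s, t ≥ 0), then dim(P) ≤ 1 + t + ⌈4s/3⌉. -/

import Mathlib

open Classical
/-- `x` and `y` are incomparable elements of a poset. -/
def Incomp {α : Type*} [PartialOrder α] (x y : α) : Prop := ¬ x ≤ y ∧ ¬ y ≤ x

/-- `r` is a linear extension of the partial order on `α`. -/
def IsLinearExtension {α : Type*} [PartialOrder α] (r : α → α → Prop) : Prop :=
  IsLinearOrder α r ∧ ∀ x y : α, x ≤ y → r x y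

/-- `α` admits a realizer consisting of `d` linear extensions. -/
def RealizerOfSize (α : Type*) [PartialOrder α] (d : ℕ) : Prop :=
  ∃ L : Fin d → (α → α → Prop), (∀ i, IsLinearExtension (L i)) ∧
    ∀ x y : α, x ≤ y ↔ ∀ i, L i x y

/-- The Dushnik–Miller dimension: the least positive integer `d`
for which the order is the intersection of `d` linear extensions. -/
noncomputable def dimP (α : Type*) [PartialOrder α] : ℕ :=
  sInf {d | 0 < d ∧ RealizerOfSize α d}

set_option linter.unusedSectionVars false

namespace Stmt15Aux

variable {α : Type*} [PartialOrder α]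

/-- the down-set `D(A)` -/
def XS (A : Set α) : Set α := {x | x ∉ A ∧ ∃ a ∈ A, x < a}
/-- the up-set `U(A)` -/
def YS (A : Set α) : Set α := {y | y ∉ A ∧ ∃ a ∈ A, a < y}

section Structure

variable {A : Set α} (hanti : IsAntichain (· ≤ ·) A)
  (hmax : ∀ x, x ∉ A → ∃ a ∈ A, x < a ∨ a < x)
  (hX : IsAntichain (· ≤ ·) (XS A)) (hY : IsAntichain (· ≤ ·) (YS A))

include hanti

lemma XA_disj {z : α} (hz : z ∈ XS A) : z ∉ A := hz.1
lemma YA_disj {z : α} (hz : z ∈ YS A) : z ∉ A := hz.1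

lemma XY_disj {z : α} (hz : z ∈ XS A) (hz' : z ∈ YS A) : False := by
  obtain ⟨-, a, ha, haz⟩ := hz
  obtain ⟨-, b, hb, hbz⟩ := hz'
  have hba : b < a := hbz.trans haz
  exact hanti hb ha (ne_of_lt hba) hba.le

/-- an element of `A` is never below an element of `XS A` -/
lemma A_not_le_X {a z : α} (ha : a ∈ A) (hz : z ∈ XS A) : ¬ a ≤ z := by
  intro h
  obtain ⟨hzA, b, hb, hzb⟩ := hz
  rcases eq_or_lt_of_le h with rfl | h'
  · exact hzA ha
  · exact hanti ha hb (ne_of_lt (h'.trans hzb)) (h'.trans hzb).le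

/-- an element of `YS A` is never below an element of `A` -/
lemma Y_not_le_A {a z : α} (ha : a ∈ A) (hz : z ∈ YS A) : ¬ z ≤ a := by
  intro h
  obtain ⟨hzA, b, hb, hbz⟩ := hz
  rcases eq_or_lt_of_le h with rfl | h'
  · exact hzA ha
  · exact hanti hb ha (ne_of_lt (hbz.trans h')) (hbz.trans h').le

lemma Y_not_le_X {y z : α} (hy : y ∈ YS A) (hz : z ∈ XS A) : ¬ y ≤ z := by
  intro h
  obtain ⟨-, b, hb, hby⟩ := hy
  obtain ⟨-, a, ha, hza⟩ := hz
  have : b < a := hby.trans_le (h.trans hza.le)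
  exact hanti hb ha (ne_of_lt this) this.le

include hmax

lemma tri (z : α) : z ∈ A ∨ z ∈ XS A ∨ z ∈ YS A := by
  by_cases hz : z ∈ A
  · exact Or.inl hz
  · obtain ⟨a, ha, h | h⟩ := hmax z hz
    · exact Or.inr (Or.inl ⟨hz, a, ha, h⟩)
    · exact Or.inr (Or.inr ⟨hz, a, ha, h⟩)

include hY in
/-- elements of `YS A` are maximal -/
lemma Y_max {y z : α} (hy : y ∈ YS A) : ¬ y < z := by
  intro h
  rcases tri hanti hmax z with hz | hz | hz
  · exact Y_not_le_A hanti hz hy h.le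
  · exact Y_not_le_X hanti hy hz h.le
  · exact hY hy hz (ne_of_lt h) h.le

include hX in
/-- elements of `XS A` are minimal -/
lemma X_min {x z : α} (hx : x ∈ XS A) : ¬ z < x := by
  intro h
  rcases tri hanti hmax z with hz | hz | hz
  · exact A_not_le_X hanti hz hx h.le
  · exact hX hz hx (ne_of_lt h) h.le
  · exact Y_not_le_X hanti hz hx h.le

lemma A_antichain_lt {a b : α} (ha : a ∈ A) (hb : b ∈ A) : ¬ a < b :=
  fun h => hanti ha hb (ne_of_lt h) h.le

end Structure

end Stmt15Aux

namespace Stmt15Aux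

variable {α : Type*} [PartialOrder α]

/-- base extension: `X < A < Y` -/
noncomputable def baseL (A : Set α) : α → ℕ := fun z =>
  if z ∈ XS A then 0 else if z ∈ A then 1 else 2

/-- bottoming `y` -/
noncomputable def bExt (A : Set α) (y : α) : α → ℕ := fun z =>
  if z ∈ XS A then 0 else if z = y then 2
  else if z ∈ A then (if z < y then 1 else 3) else 4

/-- share extension for an incomparable pair `x ∥ y`: top `x` fully and bottom `y` fully -/
noncomputable def shareL (A : Set α) (x y : α) : α → ℕ := fun z =>
  if z = x then 6 else if z ∈ XS A then (if z < y then 0 else 3)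
  else if z = y then 2
  else if z ∈ A then (if z < y then 1 else if x < z then 7 else 4)
  else if x < z then 8 else 5

/-- first extension of a `(x₁,x₂,y)` step -/
noncomputable def e1L (A : Set α) (x₁ x₂ y : α) : α → ℕ := fun z =>
  if z = x₁ then 4 else if z = x₂ then 2 else if z ∈ XS A then 0
  else if z = y then 6
  else if z ∈ A then
    (if x₁ < z then (if z < y then 5 else 7) else (if x₂ < z then 3 else 1))
  else 8

/-- second extension of a `(x₁,x₂,y)` step -/
noncomputable def e2L (A : Set α) (x₁ x₂ y : α) : α → ℕ := fun z =>
  if z = x₂ then 2 else if z ∈ XS A then 0 else if z = y then 4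
  else if z ∈ A then
    (if x₂ < z then (if z < y then 3 else 5)
     else (if z < y then 1 else if x₁ < z then 1 else 5))
  else 6

/-- first extension of a `(x,y₁,y₂)` step -/
noncomputable def f1L (A : Set α) (x y₁ y₂ : α) : α → ℕ := fun z =>
  if z = x then 2 else if z ∈ XS A then 0 else if z = y₁ then 4 else if z = y₂ then 6
  else if z ∈ A then
    (if z < y₁ then (if x < z then 3 else 1) else (if z < y₂ then 5 else 7))
  else 8

/-- second extension of a `(x,y₁,y₂)` step -/
noncomputable def f2L (A : Set α) (x y₁ y₂ : α) : α → ℕ := fun z =>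
  if z = x then 2 else if z ∈ XS A then 0 else if z = y₂ then 4
  else if z ∈ A then
    (if z < y₁ ∨ x < z then (if z < y₂ then 3 else 5) else 1)
  else 6

/-- single extension topping `x` below `y` -/
noncomputable def g1L (A : Set α) (x y : α) : α → ℕ := fun z =>
  if z = x then 2 else if z ∈ XS A then 0 else if z = y then 4
  else if z ∈ A then (if x < z then (if z < y then 3 else 5) else 1)
  else 6

def IsMono (ℓ : α → ℕ) : Prop := ∀ u v : α, u < v → ℓ u < ℓ v

section Helpers
variable {A : Set α}

lemma X_not_A' {u : α} (hu : u ∈ XS A) : u ∉ A := hu.1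
lemma A_not_X' {u : α} (hu : u ∈ A) : u ∉ XS A := fun h => h.1 hu
lemma Y_not_A' {u : α} (hu : u ∈ YS A) : u ∉ A := hu.1

lemma ne_of_A_X {u x : α} (hu : u ∈ A) (hx : x ∈ XS A) : u ≠ x :=
  fun h => hx.1 (h ▸ hu)
lemma ne_of_A_Y {u y : α} (hu : u ∈ A) (hy : y ∈ YS A) : u ≠ y :=
  fun h => hy.1 (h ▸ hu)

variable (hanti : IsAntichain (· ≤ ·) A)
include hanti

lemma Y_not_X' {u : α} (hu : u ∈ YS A) : u ∉ XS A := fun h => XY_disj hanti h hu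
lemma ne_of_X_Y {u y : α} (hu : u ∈ XS A) (hy : y ∈ YS A) : u ≠ y :=
  fun h => XY_disj hanti hu (h ▸ hy)
lemma ne_of_Y_X {u x : α} (hu : u ∈ YS A) (hx : x ∈ XS A) : u ≠ x :=
  fun h => XY_disj hanti (h ▸ hx) hu

end Helpers

section Mono
variable {A : Set α} (hanti : IsAntichain (· ≤ ·) A)
  (hmax : ∀ x, x ∉ A → ∃ a ∈ A, x < a ∨ a < x)
  (hX : IsAntichain (· ≤ ·) (XS A)) (hY : IsAntichain (· ≤ ·) (YS A))
include hanti hmax hX hY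

lemma lt_cases {u v : α} (huv : u < v) :
    (u ∈ XS A ∧ v ∈ A) ∨ (u ∈ XS A ∧ v ∈ YS A) ∨ (u ∈ A ∧ v ∈ YS A) := by
  rcases tri hanti hmax u with hu | hu | hu <;>
    rcases tri hanti hmax v with hv | hv | hv
  · exact absurd huv (A_antichain_lt hanti hmax hu hv)
  · exact absurd huv (X_min hanti hmax hX hv)
  · exact Or.inr (Or.inr ⟨hu, hv⟩)
  · exact Or.inl ⟨hu, hv⟩
  · exact absurd huv (X_min hanti hmax hX hv)
  · exact Or.inr (Or.inl ⟨hu, hv⟩)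
  · exact absurd huv (Y_max hanti hmax hY hu)
  · exact absurd huv (Y_max hanti hmax hY hu)
  · exact absurd huv (Y_max hanti hmax hY hu)

lemma mono_base : IsMono (baseL A) := by
  intro u v huv
  rcases lt_cases hanti hmax hX hY huv with ⟨hu, hv⟩ | ⟨hu, hv⟩ | ⟨hu, hv⟩ <;>
    simp only [baseL]
  · rw [if_pos hu, if_neg (A_not_X' hv), if_pos hv]; omega
  · rw [if_pos hu, if_neg (Y_not_X' hanti hv), if_neg (Y_not_A' hv)]; omega
  · rw [if_neg (A_not_X' hu), if_pos hu, if_neg (Y_not_X' hanti hv), if_neg (Y_not_A' hv)]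
    omega

lemma mono_bExt {y : α} (hy : y ∈ YS A) : IsMono (bExt A y) := by
  intro u v huv
  rcases lt_cases hanti hmax hX hY huv with ⟨hu, hv⟩ | ⟨hu, hv⟩ | ⟨hu, hv⟩ <;>
    simp only [bExt]
  · rw [if_pos hu, if_neg (A_not_X' hv), if_neg (ne_of_A_Y hv hy), if_pos hv]
    split_ifs <;> omega
  · rw [if_pos hu, if_neg (Y_not_X' hanti hv)]
    split_ifs <;> omega
  · rw [if_neg (A_not_X' hu), if_neg (ne_of_A_Y hu hy), if_pos hu,
      if_neg (Y_not_X' hanti hv)]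
    by_cases hvy : v = y
    · rw [if_pos hvy, if_pos (hvy ▸ huv)]; omega
    · rw [if_neg hvy, if_neg (Y_not_A' hv)]; split_ifs <;> omega

lemma mono_share {x y : α} (hx : x ∈ XS A) (hy : y ∈ YS A) (hnxy : ¬ x < y) :
    IsMono (shareL A x y) := by
  intro u v huv
  rcases lt_cases hanti hmax hX hY huv with ⟨hu, hv⟩ | ⟨hu, hv⟩ | ⟨hu, hv⟩ <;>
    simp only [shareL]
  · rw [if_neg (ne_of_A_X hv hx), if_neg (A_not_X' hv), if_neg (ne_of_A_Y hv hy), if_pos hv]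
    by_cases hux : u = x
    · subst hux
      rw [if_pos rfl]
      have hvny : ¬ v < y := fun h => hnxy (huv.trans h)
      rw [if_neg hvny, if_pos huv]; omega
    · rw [if_neg hux, if_pos hu]
      by_cases huy : u < y
      · rw [if_pos huy]; split_ifs <;> omega
      · rw [if_neg huy]
        have hvny : ¬ v < y := fun h => huy (huv.trans h)
        rw [if_neg hvny]; split_ifs <;> omega
  · rw [if_neg (ne_of_Y_X hanti hv hx), if_neg (Y_not_X' hanti hv)]
    by_cases hux : u = x
    · subst hux
      rw [if_pos rfl]
      have hvy : v ≠ y := fun h => hnxy (h ▸ huv)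
      rw [if_neg hvy, if_neg (Y_not_A' hv), if_pos huv]; omega
    · rw [if_neg hux, if_pos hu]
      by_cases hvy : v = y
      · rw [if_pos hvy, if_pos (hvy ▸ huv)]; omega
      · rw [if_neg hvy, if_neg (Y_not_A' hv)]
        split_ifs <;> omega
  · rw [if_neg (ne_of_A_X hu hx), if_neg (A_not_X' hu), if_neg (ne_of_A_Y hu hy), if_pos hu,
      if_neg (ne_of_Y_X hanti hv hx), if_neg (Y_not_X' hanti hv)]
    by_cases hvy : v = y
    · rw [if_pos hvy, if_pos (hvy ▸ huv)]; omega
    · rw [if_neg hvy, if_neg (Y_not_A' hv)]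
      by_cases huy : u < y
      · rw [if_pos huy]; split_ifs <;> omega
      · rw [if_neg huy]
        by_cases hxu : x < u
        · rw [if_pos hxu, if_pos (hxu.trans huv)]; omega
        · rw [if_neg hxu]; split_ifs <;> omega

lemma mono_e1 {x₁ x₂ y : α} (hx1 : x₁ ∈ XS A) (hx2 : x₂ ∈ XS A) (h12 : x₁ ≠ x₂)
    (hy : y ∈ YS A) : IsMono (e1L A x₁ x₂ y) := by
  intro u v huv
  rcases lt_cases hanti hmax hX hY huv with ⟨hu, hv⟩ | ⟨hu, hv⟩ | ⟨hu, hv⟩ <;>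
    simp only [e1L]
  · rw [if_neg (ne_of_A_X hv hx1), if_neg (ne_of_A_X hv hx2), if_neg (A_not_X' hv),
      if_neg (ne_of_A_Y hv hy), if_pos hv]
    by_cases hu1 : u = x₁
    · subst hu1
      rw [if_pos rfl, if_pos huv]; split_ifs <;> omega
    · rw [if_neg hu1]
      by_cases hu2 : u = x₂
      · subst hu2
        rw [if_pos rfl]
        by_cases h1v : x₁ < v
        · rw [if_pos h1v]; split_ifs <;> omega
        · rw [if_neg h1v, if_pos huv]; omega
      · rw [if_neg hu2, if_pos hu]; split_ifs <;> omega
  · rw [if_neg (ne_of_Y_X hanti hv hx1), if_neg (ne_of_Y_X hanti hv hx2),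
      if_neg (Y_not_X' hanti hv)]
    have hv' : e1L A x₁ x₂ y v = e1L A x₁ x₂ y v := rfl
    by_cases hvy : v = y
    · rw [if_pos hvy]
      by_cases hu1 : u = x₁
      · rw [if_pos hu1]; omega
      · rw [if_neg hu1]
        by_cases hu2 : u = x₂
        · rw [if_pos hu2]; omega
        · rw [if_neg hu2, if_pos hu]; omega
    · rw [if_neg hvy, if_neg (Y_not_A' hv)]
      by_cases hu1 : u = x₁
      · rw [if_pos hu1]; omega
      · rw [if_neg hu1]
        by_cases hu2 : u = x₂
        · rw [if_pos hu2]; omega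
        · rw [if_neg hu2, if_pos hu]; omega
  · rw [if_neg (ne_of_A_X hu hx1), if_neg (ne_of_A_X hu hx2), if_neg (A_not_X' hu),
      if_neg (ne_of_A_Y hu hy), if_pos hu, if_neg (ne_of_Y_X hanti hv hx1),
      if_neg (ne_of_Y_X hanti hv hx2), if_neg (Y_not_X' hanti hv)]
    by_cases hvy : v = y
    · rw [if_pos hvy]
      have huy : u < y := hvy ▸ huv
      by_cases h1u : x₁ < u
      · rw [if_pos h1u, if_pos huy]; omega
      · rw [if_neg h1u]; split_ifs <;> omega
    · rw [if_neg hvy, if_neg (Y_not_A' hv)]; split_ifs <;> omega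

lemma mono_e2 {x₁ x₂ y : α} (hx1 : x₁ ∈ XS A) (hx2 : x₂ ∈ XS A)
    (hy : y ∈ YS A) : IsMono (e2L A x₁ x₂ y) := by
  intro u v huv
  rcases lt_cases hanti hmax hX hY huv with ⟨hu, hv⟩ | ⟨hu, hv⟩ | ⟨hu, hv⟩ <;>
    simp only [e2L]
  · rw [if_neg (ne_of_A_X hv hx2), if_neg (A_not_X' hv), if_neg (ne_of_A_Y hv hy), if_pos hv]
    by_cases hu2 : u = x₂
    · subst hu2
      rw [if_pos rfl, if_pos huv]; split_ifs <;> omega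
    · rw [if_neg hu2, if_pos hu]; split_ifs <;> omega
  · rw [if_neg (ne_of_Y_X hanti hv hx2), if_neg (Y_not_X' hanti hv)]
    by_cases hvy : v = y
    · rw [if_pos hvy]
      by_cases hu2 : u = x₂
      · rw [if_pos hu2]; omega
      · rw [if_neg hu2, if_pos hu]; omega
    · rw [if_neg hvy, if_neg (Y_not_A' hv)]
      by_cases hu2 : u = x₂
      · rw [if_pos hu2]; omega
      · rw [if_neg hu2, if_pos hu]; omega
  · rw [if_neg (ne_of_A_X hu hx2), if_neg (A_not_X' hu), if_neg (ne_of_A_Y hu hy), if_pos hu,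
      if_neg (ne_of_Y_X hanti hv hx2), if_neg (Y_not_X' hanti hv)]
    by_cases hvy : v = y
    · rw [if_pos hvy]
      have huy : u < y := hvy ▸ huv
      by_cases h2u : x₂ < u
      · rw [if_pos h2u, if_pos huy]; omega
      · rw [if_neg h2u, if_pos huy]; omega
    · rw [if_neg hvy, if_neg (Y_not_A' hv)]; split_ifs <;> omega

lemma mono_f1 {x y₁ y₂ : α} (hx : x ∈ XS A) (hy1 : y₁ ∈ YS A) (hy2 : y₂ ∈ YS A)
    (hne : y₁ ≠ y₂) : IsMono (f1L A x y₁ y₂) := by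
  intro u v huv
  rcases lt_cases hanti hmax hX hY huv with ⟨hu, hv⟩ | ⟨hu, hv⟩ | ⟨hu, hv⟩ <;>
    simp only [f1L]
  · rw [if_neg (ne_of_A_X hv hx), if_neg (A_not_X' hv), if_neg (ne_of_A_Y hv hy1),
      if_neg (ne_of_A_Y hv hy2), if_pos hv]
    by_cases hux : u = x
    · subst hux
      rw [if_pos rfl]
      by_cases hv1 : v < y₁
      · rw [if_pos hv1, if_pos huv]; omega
      · rw [if_neg hv1]; split_ifs <;> omega
    · rw [if_neg hux, if_pos hu]; split_ifs <;> omega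
  · rw [if_neg (ne_of_Y_X hanti hv hx), if_neg (Y_not_X' hanti hv), if_neg (Y_not_A' hv)]
    by_cases hux : u = x
    · rw [if_pos hux]
      split_ifs <;> omega
    · rw [if_neg hux, if_pos hu]
      split_ifs <;> omega
  · rw [if_neg (ne_of_A_X hu hx), if_neg (A_not_X' hu), if_neg (ne_of_A_Y hu hy1),
      if_neg (ne_of_A_Y hu hy2), if_pos hu, if_neg (ne_of_Y_X hanti hv hx),
      if_neg (Y_not_X' hanti hv)]
    by_cases hv1 : v = y₁
    · rw [if_pos hv1, if_pos (hv1 ▸ huv)]; split_ifs <;> omega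
    · rw [if_neg hv1]
      by_cases hv2 : v = y₂
      · rw [if_pos hv2]
        have huy2 : u < y₂ := hv2 ▸ huv
        by_cases hu1 : u < y₁
        · rw [if_pos hu1]; split_ifs <;> omega
        · rw [if_neg hu1, if_pos huy2]; omega
      · rw [if_neg hv2, if_neg (Y_not_A' hv)]; split_ifs <;> omega

lemma mono_f2 {x y₁ y₂ : α} (hx : x ∈ XS A) (hy2 : y₂ ∈ YS A) :
    IsMono (f2L A x y₁ y₂) := by
  intro u v huv
  rcases lt_cases hanti hmax hX hY huv with ⟨hu, hv⟩ | ⟨hu, hv⟩ | ⟨hu, hv⟩ <;>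
    simp only [f2L]
  · rw [if_neg (ne_of_A_X hv hx), if_neg (A_not_X' hv), if_neg (ne_of_A_Y hv hy2), if_pos hv]
    by_cases hux : u = x
    · subst hux
      rw [if_pos rfl, if_pos (Or.inr huv)]; split_ifs <;> omega
    · rw [if_neg hux, if_pos hu]; split_ifs <;> omega
  · rw [if_neg (ne_of_Y_X hanti hv hx), if_neg (Y_not_X' hanti hv), if_neg (Y_not_A' hv)]
    by_cases hux : u = x
    · rw [if_pos hux]; split_ifs <;> omega
    · rw [if_neg hux, if_pos hu]; split_ifs <;> omega
  · rw [if_neg (ne_of_A_X hu hx), if_neg (A_not_X' hu), if_neg (ne_of_A_Y hu hy2), if_pos hu,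
      if_neg (ne_of_Y_X hanti hv hx), if_neg (Y_not_X' hanti hv)]
    by_cases hv2 : v = y₂
    · rw [if_pos hv2]
      have huy2 : u < y₂ := hv2 ▸ huv
      by_cases hc : u < y₁ ∨ x < u
      · rw [if_pos hc, if_pos huy2]; omega
      · rw [if_neg hc]; omega
    · rw [if_neg hv2, if_neg (Y_not_A' hv)]; split_ifs <;> omega

lemma mono_g1 {x y : α} (hx : x ∈ XS A) (hy : y ∈ YS A) :
    IsMono (g1L A x y) := by
  intro u v huv
  rcases lt_cases hanti hmax hX hY huv with ⟨hu, hv⟩ | ⟨hu, hv⟩ | ⟨hu, hv⟩ <;>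
    simp only [g1L]
  · rw [if_neg (ne_of_A_X hv hx), if_neg (A_not_X' hv), if_neg (ne_of_A_Y hv hy), if_pos hv]
    by_cases hux : u = x
    · subst hux
      rw [if_pos rfl, if_pos huv]; split_ifs <;> omega
    · rw [if_neg hux, if_pos hu]; split_ifs <;> omega
  · rw [if_neg (ne_of_Y_X hanti hv hx), if_neg (Y_not_X' hanti hv), if_neg (Y_not_A' hv)]
    by_cases hux : u = x
    · rw [if_pos hux]; split_ifs <;> omega
    · rw [if_neg hux, if_pos hu]; split_ifs <;> omega
  · rw [if_neg (ne_of_A_X hu hx), if_neg (A_not_X' hu), if_neg (ne_of_A_Y hu hy), if_pos hu,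
      if_neg (ne_of_Y_X hanti hv hx), if_neg (Y_not_X' hanti hv)]
    by_cases hvy : v = y
    · rw [if_pos hvy]
      have huy : u < y := hvy ▸ huv
      by_cases hxu : x < u
      · rw [if_pos hxu, if_pos huy]; omega
      · rw [if_neg hxu]; omega
    · rw [if_neg hvy, if_neg (Y_not_A' hv)]; split_ifs <;> omega


end Mono

section CoverFacts
variable {A : Set α} (hanti : IsAntichain (· ≤ ·) A)
include hanti

-- shareL facts (x ∈ XS, y ∈ YS)
omit hanti in
lemma shareL_XX {x y z : α} (hz : z ∈ XS A) (hzx : z ≠ x) :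
    shareL A x y z < shareL A x y x := by
  simp only [shareL]
  rw [if_true, if_neg hzx, if_pos hz]
  split_ifs <;> omega

omit hanti in
lemma shareL_AX {x y z : α} (hx : x ∈ XS A) (hz : z ∈ A) (hnxz : ¬ x < z) :
    shareL A x y z < shareL A x y x := by
  simp only [shareL]
  rw [if_true, if_neg (ne_of_A_X hz hx), if_neg (A_not_X' hz)]
  split_ifs with h1 h2 h3 <;> omega

lemma shareL_YY {x y z : α} (hx : x ∈ XS A) (hy : y ∈ YS A) (hz : z ∈ YS A) (hzy : z ≠ y) :
    shareL A x y y < shareL A x y z := by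
  simp only [shareL]
  rw [if_neg (ne_of_X_Y hanti hx hy).symm, if_neg (Y_not_X' hanti hy), if_true,
    if_neg (ne_of_Y_X hanti hz hx), if_neg (Y_not_X' hanti hz), if_neg hzy,
    if_neg (Y_not_A' hz)]
  split_ifs <;> omega

lemma shareL_AY {x y z : α} (hx : x ∈ XS A) (hy : y ∈ YS A) (hz : z ∈ A) (hnzy : ¬ z < y) :
    shareL A x y y < shareL A x y z := by
  simp only [shareL]
  rw [if_neg (ne_of_X_Y hanti hx hy).symm, if_neg (Y_not_X' hanti hy), if_true,
    if_neg (ne_of_A_X hz hx), if_neg (A_not_X' hz), if_neg (ne_of_A_Y hz hy), if_pos hz,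
    if_neg hnzy]
  split_ifs <;> omega

lemma shareL_crossX {x y z : α} (hx : x ∈ XS A) (hy : y ∈ YS A) (hz : z ∈ XS A)
    (hzx : z ≠ x) (hnzy : ¬ z < y) :
    shareL A x y y < shareL A x y z := by
  simp only [shareL]
  rw [if_neg (ne_of_X_Y hanti hx hy).symm, if_neg (Y_not_X' hanti hy), if_true,
    if_neg hzx, if_pos hz, if_neg hnzy]
  omega

lemma shareL_crossY {x y z : α} (hx : x ∈ XS A) (hy : y ∈ YS A) (hz : z ∈ YS A)
    (hnxz : ¬ x < z) :
    shareL A x y z < shareL A x y x := by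
  simp only [shareL]
  rw [if_true, if_neg (ne_of_Y_X hanti hz hx), if_neg (Y_not_X' hanti hz)]
  by_cases hzy : z = y
  · rw [if_pos hzy]; omega
  · rw [if_neg hzy, if_neg (Y_not_A' hz), if_neg hnxz]; omega

-- e1L facts
omit hanti in
lemma e1L_XX1 {x₁ x₂ y z : α} (hz : z ∈ XS A) (hz1 : z ≠ x₁) :
    e1L A x₁ x₂ y z < e1L A x₁ x₂ y x₁ := by
  simp only [e1L]
  rw [if_true, if_neg hz1]
  by_cases hz2 : z = x₂
  · rw [if_pos hz2]; omega
  · rw [if_neg hz2, if_pos hz]; omega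

omit hanti in
lemma e1L_AX1 {x₁ x₂ y z : α} (hx1 : x₁ ∈ XS A) (hx2 : x₂ ∈ XS A) (hy : y ∈ YS A)
    (hz : z ∈ A)
    (hn1 : ¬ x₁ < z) : e1L A x₁ x₂ y z < e1L A x₁ x₂ y x₁ := by
  simp only [e1L]
  rw [if_true, if_neg (ne_of_A_X hz hx1), if_neg (ne_of_A_X hz hx2),
    if_neg (A_not_X' hz), if_neg (ne_of_A_Y hz hy), if_pos hz, if_neg hn1]
  split_ifs <;> omega

omit hanti in
lemma e1L_AX2 {x₁ x₂ y z : α} (hx1 : x₁ ∈ XS A) (hx2 : x₂ ∈ XS A) (h12 : x₁ ≠ x₂)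
    (hy : y ∈ YS A)
    (hz : z ∈ A) (hn1 : ¬ x₁ < z) (hn2 : ¬ x₂ < z) :
    e1L A x₁ x₂ y z < e1L A x₁ x₂ y x₂ := by
  simp only [e1L]
  rw [if_neg (Ne.symm h12), if_true, if_neg (ne_of_A_X hz hx1),
    if_neg (ne_of_A_X hz hx2), if_neg (A_not_X' hz), if_neg (ne_of_A_Y hz hy),
    if_pos hz, if_neg hn1, if_neg hn2]
  omega

lemma e1L_YY {x₁ x₂ y z : α} (hx1 : x₁ ∈ XS A) (hx2 : x₂ ∈ XS A) (hy : y ∈ YS A)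
    (hz : z ∈ YS A) (hzy : z ≠ y) :
    e1L A x₁ x₂ y y < e1L A x₁ x₂ y z := by
  simp only [e1L]
  rw [if_neg (ne_of_X_Y hanti hx1 hy).symm, if_neg (ne_of_X_Y hanti hx2 hy).symm,
    if_neg (Y_not_X' hanti hy), if_true, if_neg (ne_of_Y_X hanti hz hx1),
    if_neg (ne_of_Y_X hanti hz hx2), if_neg (Y_not_X' hanti hz), if_neg hzy,
    if_neg (Y_not_A' hz)]
  omega

lemma e1L_AY {x₁ x₂ y z : α} (hx1 : x₁ ∈ XS A) (hx2 : x₂ ∈ XS A) (hy : y ∈ YS A)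
    (hz : z ∈ A) (hnzy : ¬ z < y) (h1z : x₁ < z) :
    e1L A x₁ x₂ y y < e1L A x₁ x₂ y z := by
  simp only [e1L]
  rw [if_neg (ne_of_X_Y hanti hx1 hy).symm, if_neg (ne_of_X_Y hanti hx2 hy).symm,
    if_neg (Y_not_X' hanti hy), if_true, if_neg (ne_of_A_X hz hx1),
    if_neg (ne_of_A_X hz hx2), if_neg (A_not_X' hz), if_neg (ne_of_A_Y hz hy),
    if_pos hz, if_pos h1z, if_neg hnzy]
  omega

-- e2L facts
omit hanti in
lemma e2L_XX2 {x₁ x₂ y z : α} (hz : z ∈ XS A) (hz2 : z ≠ x₂) :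
    e2L A x₁ x₂ y z < e2L A x₁ x₂ y x₂ := by
  simp only [e2L]
  rw [if_true, if_neg hz2, if_pos hz]; omega

omit hanti in
-- needs no hanti
omit hanti in
lemma e2L_AX2 {x₁ x₂ y z : α} (hx2 : x₂ ∈ XS A) (hy : y ∈ YS A) (hz : z ∈ A)
    (hn2 : ¬ x₂ < z)
    (hor : z < y ∨ x₁ < z) : e2L A x₁ x₂ y z < e2L A x₁ x₂ y x₂ := by
  simp only [e2L]
  rw [if_true, if_neg (ne_of_A_X hz hx2), if_neg (A_not_X' hz),
    if_neg (ne_of_A_Y hz hy), if_pos hz, if_neg hn2]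
  rcases hor with h' | h'
  · rw [if_pos h']; omega
  · by_cases hzy : z < y
    · rw [if_pos hzy]; omega
    · rw [if_neg hzy, if_pos h']; omega

lemma e2L_AY {x₁ x₂ y z : α} (hx2 : x₂ ∈ XS A) (hy : y ∈ YS A)
    (hz : z ∈ A) (hnzy : ¬ z < y) (hn1 : ¬ x₁ < z) :
    e2L A x₁ x₂ y y < e2L A x₁ x₂ y z := by
  simp only [e2L]
  rw [if_neg (ne_of_X_Y hanti hx2 hy).symm, if_neg (Y_not_X' hanti hy), if_true,
    if_neg (ne_of_A_X hz hx2), if_neg (A_not_X' hz), if_neg (ne_of_A_Y hz hy),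
    if_pos hz]
  rw [if_neg hnzy, if_neg hn1]
  split_ifs <;> omega

lemma e2L_YY {x₁ x₂ y z : α} (hx2 : x₂ ∈ XS A) (hy : y ∈ YS A)
    (hz : z ∈ YS A) (hzy : z ≠ y) :
    e2L A x₁ x₂ y y < e2L A x₁ x₂ y z := by
  simp only [e2L]
  rw [if_neg (ne_of_X_Y hanti hx2 hy).symm, if_neg (Y_not_X' hanti hy), if_true,
    if_neg (ne_of_Y_X hanti hz hx2), if_neg (Y_not_X' hanti hz), if_neg hzy,
    if_neg (Y_not_A' hz)]
  omega


-- f1L facts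
omit hanti in
lemma f1L_XX {x y₁ y₂ z : α} (hz : z ∈ XS A) (hzx : z ≠ x) :
    f1L A x y₁ y₂ z < f1L A x y₁ y₂ x := by
  simp only [f1L]
  rw [if_true, if_neg hzx, if_pos hz]; omega

omit hanti in
lemma f1L_AX {x y₁ y₂ z : α} (hx : x ∈ XS A) (hy1 : y₁ ∈ YS A) (hy2 : y₂ ∈ YS A)
    (hz : z ∈ A) (hnxz : ¬ x < z) (hz1 : z < y₁) :
    f1L A x y₁ y₂ z < f1L A x y₁ y₂ x := by
  simp only [f1L]
  rw [if_true, if_neg (ne_of_A_X hz hx), if_neg (A_not_X' hz), if_neg (ne_of_A_Y hz hy1),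
    if_neg (ne_of_A_Y hz hy2), if_pos hz, if_pos hz1, if_neg hnxz]
  omega

lemma f1L_AY1 {x y₁ y₂ z : α} (hx : x ∈ XS A) (hy1 : y₁ ∈ YS A) (hy2 : y₂ ∈ YS A)
    (hz : z ∈ A) (hnz1 : ¬ z < y₁) :
    f1L A x y₁ y₂ y₁ < f1L A x y₁ y₂ z := by
  simp only [f1L]
  rw [if_neg (ne_of_Y_X hanti hy1 hx), if_neg (Y_not_X' hanti hy1), if_true,
    if_neg (ne_of_A_X hz hx), if_neg (A_not_X' hz), if_neg (ne_of_A_Y hz hy1),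
    if_neg (ne_of_A_Y hz hy2), if_pos hz, if_neg hnz1]
  split_ifs <;> omega

lemma f1L_YY1 {x y₁ y₂ z : α} (hx : x ∈ XS A) (hy1 : y₁ ∈ YS A)
    (hz : z ∈ YS A) (hz1 : z ≠ y₁) :
    f1L A x y₁ y₂ y₁ < f1L A x y₁ y₂ z := by
  simp only [f1L]
  rw [if_neg (ne_of_Y_X hanti hy1 hx), if_neg (Y_not_X' hanti hy1), if_true,
    if_neg (ne_of_Y_X hanti hz hx), if_neg (Y_not_X' hanti hz), if_neg hz1]
  by_cases hz2 : z = y₂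
  · rw [if_pos hz2]; omega
  · rw [if_neg hz2, if_neg (Y_not_A' hz)]; omega

lemma f1L_AY2 {x y₁ y₂ z : α} (hx : x ∈ XS A) (hy1 : y₁ ∈ YS A) (hy2 : y₂ ∈ YS A)
    (h12 : y₁ ≠ y₂) (hz : z ∈ A) (hnz1 : ¬ z < y₁) (hnz2 : ¬ z < y₂) :
    f1L A x y₁ y₂ y₂ < f1L A x y₁ y₂ z := by
  simp only [f1L]
  rw [if_neg (ne_of_Y_X hanti hy2 hx), if_neg (Y_not_X' hanti hy2),
    if_neg (Ne.symm h12), if_true,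
    if_neg (ne_of_A_X hz hx), if_neg (A_not_X' hz), if_neg (ne_of_A_Y hz hy1),
    if_neg (ne_of_A_Y hz hy2), if_pos hz, if_neg hnz1, if_neg hnz2]
  omega

-- f2L facts
omit hanti in
lemma f2L_XX {x y₁ y₂ z : α} (hz : z ∈ XS A) (hzx : z ≠ x) :
    f2L A x y₁ y₂ z < f2L A x y₁ y₂ x := by
  simp only [f2L]
  rw [if_true, if_neg hzx, if_pos hz]; omega

omit hanti in
lemma f2L_AX {x y₁ y₂ z : α} (hx : x ∈ XS A) (hy2 : y₂ ∈ YS A)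
    (hz : z ∈ A) (hnxz : ¬ x < z) (hnz1 : ¬ z < y₁) :
    f2L A x y₁ y₂ z < f2L A x y₁ y₂ x := by
  simp only [f2L]
  rw [if_true, if_neg (ne_of_A_X hz hx), if_neg (A_not_X' hz), if_neg (ne_of_A_Y hz hy2),
    if_pos hz, if_neg (by tauto : ¬ (z < y₁ ∨ x < z))]
  omega

lemma f2L_AY2 {x y₁ y₂ z : α} (hx : x ∈ XS A) (hy2 : y₂ ∈ YS A)
    (hz : z ∈ A) (hnz2 : ¬ z < y₂) (hor : z < y₁ ∨ x < z) :
    f2L A x y₁ y₂ y₂ < f2L A x y₁ y₂ z := by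
  simp only [f2L]
  rw [if_neg (ne_of_Y_X hanti hy2 hx), if_neg (Y_not_X' hanti hy2), if_true,
    if_neg (ne_of_A_X hz hx), if_neg (A_not_X' hz), if_neg (ne_of_A_Y hz hy2),
    if_pos hz, if_pos hor, if_neg hnz2]
  omega

lemma f2L_YY2 {x y₁ y₂ z : α} (hx : x ∈ XS A) (hy2 : y₂ ∈ YS A)
    (hz : z ∈ YS A) (hz2 : z ≠ y₂) :
    f2L A x y₁ y₂ y₂ < f2L A x y₁ y₂ z := by
  simp only [f2L]
  rw [if_neg (ne_of_Y_X hanti hy2 hx), if_neg (Y_not_X' hanti hy2), if_true,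
    if_neg (ne_of_Y_X hanti hz hx), if_neg (Y_not_X' hanti hz), if_neg hz2,
    if_neg (Y_not_A' hz)]
  omega

-- g1L facts
omit hanti in
lemma g1L_XX {x y z : α} (hz : z ∈ XS A) (hzx : z ≠ x) :
    g1L A x y z < g1L A x y x := by
  simp only [g1L]
  rw [if_true, if_neg hzx, if_pos hz]; omega

omit hanti in
lemma g1L_AX {x y z : α} (hx : x ∈ XS A) (hy : y ∈ YS A)
    (hz : z ∈ A) (hnxz : ¬ x < z) :
    g1L A x y z < g1L A x y x := by
  simp only [g1L]
  rw [if_true, if_neg (ne_of_A_X hz hx), if_neg (A_not_X' hz), if_neg (ne_of_A_Y hz hy),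
    if_pos hz, if_neg hnxz]
  omega

-- bExt facts
lemma bExt_AY {y z : α} (hy : y ∈ YS A) (hz : z ∈ A) (hnzy : ¬ z < y) :
    bExt A y y < bExt A y z := by
  simp only [bExt]
  rw [if_neg (Y_not_X' hanti hy), if_true, if_neg (A_not_X' hz),
    if_neg (ne_of_A_Y hz hy), if_pos hz, if_neg hnzy]
  omega

lemma bExt_YY {y z : α} (hy : y ∈ YS A) (hz : z ∈ YS A) (hzy : z ≠ y) :
    bExt A y y < bExt A y z := by
  simp only [bExt]
  rw [if_neg (Y_not_X' hanti hy), if_true, if_neg (Y_not_X' hanti hz), if_neg hzy,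
    if_neg (Y_not_A' hz)]
  omega

-- bounds
omit hanti in
lemma baseL_le : ∀ z, baseL A z ≤ 10 := by
  intro z; simp only [baseL]; split_ifs <;> omega
omit hanti in
lemma bExt_le {y : α} : ∀ z, bExt A y z ≤ 10 := by
  intro z; simp only [bExt]; split_ifs <;> omega
omit hanti in
lemma shareL_le {x y : α} : ∀ z, shareL A x y z ≤ 10 := by
  intro z; simp only [shareL]; split_ifs <;> omega
omit hanti in
lemma e1L_le {x₁ x₂ y : α} : ∀ z, e1L A x₁ x₂ y z ≤ 10 := by
  intro z; simp only [e1L]; split_ifs <;> omega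
omit hanti in
lemma e2L_le {x₁ x₂ y : α} : ∀ z, e2L A x₁ x₂ y z ≤ 10 := by
  intro z; simp only [e2L]; split_ifs <;> omega
omit hanti in
lemma f1L_le {x y₁ y₂ : α} : ∀ z, f1L A x y₁ y₂ z ≤ 10 := by
  intro z; simp only [f1L]; split_ifs <;> omega
omit hanti in
lemma f2L_le {x y₁ y₂ : α} : ∀ z, f2L A x y₁ y₂ z ≤ 10 := by
  intro z; simp only [f2L]; split_ifs <;> omega
omit hanti in
lemma g1L_le {x y : α} : ∀ z, g1L A x y z ≤ 10 := by
  intro z; simp only [g1L]; split_ifs <;> omega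

end CoverFacts


/-- budget of extensions for a state with `σ` x's and `μ` y's -/
def W (σ μ : ℕ) : ℕ := if 2*σ ≤ μ then μ else 2*(μ-σ) + (4*(2*σ-μ)+2)/3

/-- the list `L` of level functions covers all reversal demands of `X'`, `Y'` -/
def Covers (A : Set α) (L : List (α → ℕ)) (X' Y' : Finset α) : Prop :=
  (∀ x ∈ X', ∀ z : α, ((z ∈ XS A ∧ z ≠ x) ∨ (z ∈ A ∧ ¬ x < z)) → ∃ ℓ ∈ L, ℓ z < ℓ x) ∧
  (∀ y ∈ Y', ∀ z : α, ((z ∈ YS A ∧ z ≠ y) ∨ (z ∈ A ∧ ¬ z < y)) → ∃ ℓ ∈ L, ℓ y < ℓ z) ∧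
  (∀ x ∈ X', ∀ y ∈ Y', ¬ x < y → ∃ ℓ ∈ L, ℓ y < ℓ x)

section Main
variable {A : Set α} (hanti : IsAntichain (· ≤ ·) A)
  (hmax : ∀ x, x ∉ A → ∃ a ∈ A, x < a ∨ a < x)
  (hX : IsAntichain (· ≤ ·) (XS A)) (hY : IsAntichain (· ≤ ·) (YS A))
include hanti hmax hX hY

lemma main : ∀ (n : ℕ) (X' Y' : Finset α), X'.card + Y'.card ≤ n →
    (∀ x ∈ X', x ∈ XS A) → (∀ y ∈ Y', y ∈ YS A) → X'.card ≤ Y'.card →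
    ∃ L : List (α → ℕ),
      (L.length ≤ W X'.card Y'.card) ∧ (∀ ℓ ∈ L, IsMono ℓ) ∧
      (∀ ℓ ∈ L, ∀ u, ℓ u ≤ 10) ∧ Covers A L X' Y' ∧ (Y'.Nonempty → L ≠ []) := by
  intro n
  induction n with
  | zero =>
    intro X' Y' hn _ _ _
    have hX0 : X' = ∅ := Finset.card_eq_zero.1 (by omega)
    have hY0 : Y' = ∅ := Finset.card_eq_zero.1 (by omega)
    refine ⟨[], by simp [W], by simp, by simp, ⟨?_, ?_, ?_⟩, ?_⟩
    · intro x hx; rw [hX0] at hx; exact absurd hx (Finset.notMem_empty x)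
    · intro y hy; rw [hY0] at hy; exact absurd hy (Finset.notMem_empty y)
    · intro x hx; rw [hX0] at hx; exact absurd hx (Finset.notMem_empty x)
    · intro h; rw [hY0] at h; exact absurd h (by simp)
  | succ n ih =>
    intro X' Y' hn hXsub hYsub hle
    by_cases hYe : Y' = ∅
    · have hX0 : X' = ∅ := Finset.card_eq_zero.1 (by rw [hYe] at hle; simpa using hle)
      refine ⟨[], by simp [hX0, hYe, W], by simp, by simp, ⟨?_, ?_, ?_⟩, ?_⟩
      · intro x hx; rw [hX0] at hx; exact absurd hx (Finset.notMem_empty x)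
      · intro y hy; rw [hYe] at hy; exact absurd hy (Finset.notMem_empty y)
      · intro x hx; rw [hX0] at hx; exact absurd hx (Finset.notMem_empty x)
      · intro h; rw [hYe] at h; exact absurd h (by simp)
    obtain ⟨y0, hy0⟩ := Finset.nonempty_iff_ne_empty.2 hYe
    have hy0Y : y0 ∈ YS A := hYsub y0 hy0
    by_cases hXe : X' = ∅
    · -- bottom the y's one at a time
      obtain ⟨L', hlen, hm, hb, ⟨hcx, hcy, hcxy⟩, -⟩ :=
        ih X' (Y'.erase y0) (by
            have := Finset.card_erase_of_mem hy0
            omega)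
          hXsub (fun y hy => hYsub y (Finset.mem_of_mem_erase hy))
          (by simp [hXe])
      have hce : (Y'.erase y0).card = Y'.card - 1 := Finset.card_erase_of_mem hy0
      have hYc : 1 ≤ Y'.card := Finset.card_pos.2 ⟨y0, hy0⟩
      refine ⟨bExt A y0 :: L', ?_, ?_, ?_, ⟨?_, ?_, ?_⟩, by simp⟩
      · simp only [List.length_cons]
        simp only [W, hXe, Finset.card_empty] at hlen ⊢
        rw [hce] at hlen
        split_ifs at hlen ⊢ <;> omega
      · intro ℓ hℓ
        rcases List.mem_cons.1 hℓ with rfl | h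
        · exact mono_bExt hanti hmax hX hY hy0Y
        · exact hm ℓ h
      · intro ℓ hℓ
        rcases List.mem_cons.1 hℓ with rfl | h
        · exact bExt_le
        · exact hb ℓ h
      · intro x hx; rw [hXe] at hx; exact absurd hx (Finset.notMem_empty x)
      · intro y' hy' z hz
        by_cases hyy : y' = y0
        · subst hyy
          rcases hz with ⟨hzY, hzy⟩ | ⟨hzA, hzy⟩
          · exact ⟨bExt A y', List.mem_cons_self, bExt_YY hanti hy0Y hzY hzy⟩
          · exact ⟨bExt A y', List.mem_cons_self, bExt_AY hanti hy0Y hzA hzy⟩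
        · obtain ⟨ℓ, hℓ, hv⟩ := hcy y' (Finset.mem_erase.2 ⟨hyy, hy'⟩) z hz
          exact ⟨ℓ, List.mem_cons_of_mem _ hℓ, hv⟩
      · intro x hx; rw [hXe] at hx; exact absurd hx (Finset.notMem_empty x)
    -- X' nonempty
    obtain ⟨x0, hx0⟩ := Finset.nonempty_iff_ne_empty.2 hXe
    have hXc : 1 ≤ X'.card := Finset.card_pos.2 ⟨x0, hx0⟩
    have hYc : 1 ≤ Y'.card := Finset.card_pos.2 ⟨y0, hy0⟩
    by_cases hinc : ∃ x ∈ X', ∃ y ∈ Y', ¬ x < y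
    · -- share step
      obtain ⟨x, hx, y, hy, hnxy⟩ := hinc
      have hxX : x ∈ XS A := hXsub x hx
      have hyY : y ∈ YS A := hYsub y hy
      obtain ⟨L', hlen, hm, hb, ⟨hcx, hcy, hcxy⟩, -⟩ :=
        ih (X'.erase x) (Y'.erase y)
          (by have := Finset.card_erase_of_mem hx
              have := Finset.card_erase_of_mem hy
              omega)
          (fun z hz => hXsub z (Finset.mem_of_mem_erase hz))
          (fun z hz => hYsub z (Finset.mem_of_mem_erase hz))
          (by rw [Finset.card_erase_of_mem hx, Finset.card_erase_of_mem hy]; omega)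
      have hce1 : (X'.erase x).card = X'.card - 1 := Finset.card_erase_of_mem hx
      have hce2 : (Y'.erase y).card = Y'.card - 1 := Finset.card_erase_of_mem hy
      refine ⟨shareL A x y :: L', ?_, ?_, ?_, ⟨?_, ?_, ?_⟩, by simp⟩
      · simp only [List.length_cons]
        rw [hce1, hce2] at hlen
        simp only [W] at hlen ⊢
        split_ifs at hlen ⊢ <;> omega
      · intro ℓ hℓ
        rcases List.mem_cons.1 hℓ with rfl | h
        · exact mono_share hanti hmax hX hY hxX hyY hnxy
        · exact hm ℓ h
      · intro ℓ hℓ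
        rcases List.mem_cons.1 hℓ with rfl | h
        · exact shareL_le
        · exact hb ℓ h
      · intro x' hx' z hz
        by_cases hxx : x' = x
        · subst hxx
          rcases hz with ⟨hzX, hzx⟩ | ⟨hzA, hzx⟩
          · exact ⟨_, List.mem_cons_self, shareL_XX hzX hzx⟩
          · exact ⟨_, List.mem_cons_self, shareL_AX hxX hzA hzx⟩
        · obtain ⟨ℓ, hℓ, hv⟩ := hcx x' (Finset.mem_erase.2 ⟨hxx, hx'⟩) z hz
          exact ⟨ℓ, List.mem_cons_of_mem _ hℓ, hv⟩
      · intro y' hy' z hz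
        by_cases hyy : y' = y
        · subst hyy
          rcases hz with ⟨hzY, hzy⟩ | ⟨hzA, hzy⟩
          · exact ⟨_, List.mem_cons_self, shareL_YY hanti hxX hyY hzY hzy⟩
          · exact ⟨_, List.mem_cons_self, shareL_AY hanti hxX hyY hzA hzy⟩
        · obtain ⟨ℓ, hℓ, hv⟩ := hcy y' (Finset.mem_erase.2 ⟨hyy, hy'⟩) z hz
          exact ⟨ℓ, List.mem_cons_of_mem _ hℓ, hv⟩
      · intro x' hx' y' hy' hn'
        by_cases hxx : x' = x
        · subst hxx
          exact ⟨_, List.mem_cons_self,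
            shareL_crossY hanti hxX hyY (hYsub y' hy') hn'⟩
        · by_cases hyy : y' = y
          · subst hyy
            exact ⟨_, List.mem_cons_self,
              shareL_crossX hanti hxX hyY (hXsub x' hx') hxx hn'⟩
          · obtain ⟨ℓ, hℓ, hv⟩ := hcxy x' (Finset.mem_erase.2 ⟨hxx, hx'⟩)
              y' (Finset.mem_erase.2 ⟨hyy, hy'⟩) hn'
            exact ⟨ℓ, List.mem_cons_of_mem _ hℓ, hv⟩
    · push_neg at hinc
      by_cases hlt : X'.card < Y'.card
      · -- C2 step : one x, two y's
        have h2 : 1 < Y'.card := by omega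
        obtain ⟨y₁, hy₁, y₂, hy₂, hne⟩ := Finset.one_lt_card.1 h2
        have hy₁Y : y₁ ∈ YS A := hYsub y₁ hy₁
        have hy₂Y : y₂ ∈ YS A := hYsub y₂ hy₂
        have hxX : x0 ∈ XS A := hXsub x0 hx0
        have hy₂e : y₂ ∈ Y'.erase y₁ := Finset.mem_erase.2 ⟨hne.symm, hy₂⟩
        obtain ⟨L', hlen, hm, hb, ⟨hcx, hcy, hcxy⟩, -⟩ :=
          ih (X'.erase x0) ((Y'.erase y₁).erase y₂)
            (by have := Finset.card_erase_of_mem hx0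
                have := Finset.card_erase_of_mem hy₁
                have := Finset.card_erase_of_mem hy₂e
                omega)
            (fun z hz => hXsub z (Finset.mem_of_mem_erase hz))
            (fun z hz => hYsub z (Finset.mem_of_mem_erase (Finset.mem_of_mem_erase hz)))
            (by rw [Finset.card_erase_of_mem hx0, Finset.card_erase_of_mem hy₂e,
                  Finset.card_erase_of_mem hy₁]
                omega)
        have hce1 : (X'.erase x0).card = X'.card - 1 := Finset.card_erase_of_mem hx0
        have hce2 : ((Y'.erase y₁).erase y₂).card = Y'.card - 2 := by
          rw [Finset.card_erase_of_mem hy₂e, Finset.card_erase_of_mem hy₁]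
          omega
        refine ⟨f1L A x0 y₁ y₂ :: f2L A x0 y₁ y₂ :: L', ?_, ?_, ?_, ⟨?_, ?_, ?_⟩, by simp⟩
        · simp only [List.length_cons]
          rw [hce1, hce2] at hlen
          simp only [W] at hlen ⊢
          split_ifs at hlen ⊢ <;> omega
        · intro ℓ hℓ
          rcases List.mem_cons.1 hℓ with rfl | h
          · exact mono_f1 hanti hmax hX hY hxX hy₁Y hy₂Y hne
          rcases List.mem_cons.1 h with rfl | h'
          · exact mono_f2 hanti hmax hX hY hxX hy₂Y
          · exact hm ℓ h'
        · intro ℓ hℓ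
          rcases List.mem_cons.1 hℓ with rfl | h
          · exact f1L_le
          rcases List.mem_cons.1 h with rfl | h'
          · exact f2L_le
          · exact hb ℓ h'
        · -- x-coverage
          intro x' hx' z hz
          by_cases hxx : x' = x0
          · subst hxx
            rcases hz with ⟨hzX, hzx⟩ | ⟨hzA, hzx⟩
            · exact ⟨_, List.mem_cons_self, f1L_XX hzX hzx⟩
            · by_cases hz1 : z < y₁
              · exact ⟨_, List.mem_cons_self, f1L_AX hxX hy₁Y hy₂Y hzA hzx hz1⟩
              · exact ⟨_, List.mem_cons_of_mem _ (List.mem_cons_self),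
                  f2L_AX hxX hy₂Y hzA hzx hz1⟩
          · obtain ⟨ℓ, hℓ, hv⟩ := hcx x' (Finset.mem_erase.2 ⟨hxx, hx'⟩) z hz
            exact ⟨ℓ, List.mem_cons_of_mem _ (List.mem_cons_of_mem _ hℓ), hv⟩
        · -- y-coverage
          intro y' hy' z hz
          by_cases hyy1 : y' = y₁
          · subst hyy1
            rcases hz with ⟨hzY, hzy⟩ | ⟨hzA, hzy⟩
            · exact ⟨_, List.mem_cons_self, f1L_YY1 hanti hxX hy₁Y hzY hzy⟩
            · exact ⟨_, List.mem_cons_self, f1L_AY1 hanti hxX hy₁Y hy₂Y hzA hzy⟩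
          by_cases hyy2 : y' = y₂
          · subst hyy2
            rcases hz with ⟨hzY, hzy⟩ | ⟨hzA, hzy⟩
            · exact ⟨_, List.mem_cons_of_mem _ (List.mem_cons_self),
                f2L_YY2 hanti hxX hy₂Y hzY hzy⟩
            · by_cases hor : z < y₁ ∨ x0 < z
              · exact ⟨_, List.mem_cons_of_mem _ (List.mem_cons_self),
                  f2L_AY2 hanti hxX hy₂Y hzA hzy hor⟩
              · push_neg at hor
                exact ⟨_, List.mem_cons_self,
                  f1L_AY2 hanti hxX hy₁Y hy₂Y hne hzA hor.1 hzy⟩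
          · obtain ⟨ℓ, hℓ, hv⟩ := hcy y'
              (Finset.mem_erase.2 ⟨hyy2, Finset.mem_erase.2 ⟨hyy1, hy'⟩⟩) z hz
            exact ⟨ℓ, List.mem_cons_of_mem _ (List.mem_cons_of_mem _ hℓ), hv⟩
        · intro x' hx' y' hy' hn'
          exact absurd (hinc x' hx' y' hy') hn'
      · -- X'.card = Y'.card
        have heq : X'.card = Y'.card := by omega
        by_cases h1 : X'.card = 1
        · -- single pair step
          obtain ⟨xx, hxx⟩ := Finset.card_eq_one.1 h1
          obtain ⟨yy, hyy⟩ := Finset.card_eq_one.1 (heq ▸ h1)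
          have hxX : xx ∈ XS A := hXsub xx (by rw [hxx]; exact Finset.mem_singleton_self xx)
          have hyY : yy ∈ YS A := hYsub yy (by rw [hyy]; exact Finset.mem_singleton_self yy)
          refine ⟨[g1L A xx yy, bExt A yy], ?_, ?_, ?_, ⟨?_, ?_, ?_⟩, by simp⟩
          · rw [h1, ← heq, h1]; simp [W]
          · intro ℓ hℓ
            rcases List.mem_cons.1 hℓ with rfl | h
            · exact mono_g1 hanti hmax hX hY hxX hyY
            rcases List.mem_cons.1 h with rfl | h'
            · exact mono_bExt hanti hmax hX hY hyY
            · exact absurd h' (by simp)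
          · intro ℓ hℓ
            rcases List.mem_cons.1 hℓ with rfl | h
            · exact g1L_le
            rcases List.mem_cons.1 h with rfl | h'
            · exact bExt_le
            · exact absurd h' (by simp)
          · intro x' hx' z hz
            rw [hxx, Finset.mem_singleton] at hx'
            subst hx'
            rcases hz with ⟨hzX, hzx⟩ | ⟨hzA, hzx⟩
            · exact ⟨_, List.mem_cons_self, g1L_XX hzX hzx⟩
            · exact ⟨_, List.mem_cons_self, g1L_AX hxX hyY hzA hzx⟩
          · intro y' hy' z hz
            rw [hyy, Finset.mem_singleton] at hy'
            subst hy'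
            rcases hz with ⟨hzY, hzy⟩ | ⟨hzA, hzy⟩
            · exact ⟨_, List.mem_cons_of_mem _ (List.mem_cons_self),
                bExt_YY hanti hyY hzY hzy⟩
            · exact ⟨_, List.mem_cons_of_mem _ (List.mem_cons_self),
                bExt_AY hanti hyY hzA hzy⟩
          · intro x' hx' y' hy' hn'
            exact absurd (hinc x' hx' y' hy') hn'
        · -- C1 step : two x's, one y
          have h2 : 1 < X'.card := by omega
          obtain ⟨x₁, hx₁, x₂, hx₂, hne⟩ := Finset.one_lt_card.1 h2
          have hx₁X : x₁ ∈ XS A := hXsub x₁ hx₁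
          have hx₂X : x₂ ∈ XS A := hXsub x₂ hx₂
          have hy0Y' : y0 ∈ YS A := hy0Y
          have hx₂e : x₂ ∈ X'.erase x₁ := Finset.mem_erase.2 ⟨hne.symm, hx₂⟩
          obtain ⟨L', hlen, hm, hb, ⟨hcx, hcy, hcxy⟩, -⟩ :=
            ih ((X'.erase x₁).erase x₂) (Y'.erase y0)
              (by have := Finset.card_erase_of_mem hx₁
                  have := Finset.card_erase_of_mem hx₂e
                  have := Finset.card_erase_of_mem hy0
                  omega)
              (fun z hz => hXsub z (Finset.mem_of_mem_erase (Finset.mem_of_mem_erase hz)))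
              (fun z hz => hYsub z (Finset.mem_of_mem_erase hz))
              (by rw [Finset.card_erase_of_mem hx₂e, Finset.card_erase_of_mem hx₁,
                    Finset.card_erase_of_mem hy0]
                  omega)
          have hce1 : ((X'.erase x₁).erase x₂).card = X'.card - 2 := by
            rw [Finset.card_erase_of_mem hx₂e, Finset.card_erase_of_mem hx₁]
            omega
          have hce2 : (Y'.erase y0).card = Y'.card - 1 := Finset.card_erase_of_mem hy0
          refine ⟨e1L A x₁ x₂ y0 :: e2L A x₁ x₂ y0 :: L', ?_, ?_, ?_, ⟨?_, ?_, ?_⟩, by simp⟩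
          · simp only [List.length_cons]
            rw [hce1, hce2] at hlen
            simp only [W] at hlen ⊢
            split_ifs at hlen ⊢ <;> omega
          · intro ℓ hℓ
            rcases List.mem_cons.1 hℓ with rfl | h
            · exact mono_e1 hanti hmax hX hY hx₁X hx₂X hne hy0Y'
            rcases List.mem_cons.1 h with rfl | h'
            · exact mono_e2 hanti hmax hX hY hx₁X hx₂X hy0Y'
            · exact hm ℓ h'
          · intro ℓ hℓ
            rcases List.mem_cons.1 hℓ with rfl | h
            · exact e1L_le
            rcases List.mem_cons.1 h with rfl | h'
            · exact e2L_le
            · exact hb ℓ h'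
          · -- x coverage
            intro x' hx' z hz
            by_cases hxx1 : x' = x₁
            · subst hxx1
              rcases hz with ⟨hzX, hzx⟩ | ⟨hzA, hzx⟩
              · exact ⟨_, List.mem_cons_self, e1L_XX1 hzX hzx⟩
              · exact ⟨_, List.mem_cons_self, e1L_AX1 hx₁X hx₂X hy0Y' hzA hzx⟩
            by_cases hxx2 : x' = x₂
            · subst hxx2
              rcases hz with ⟨hzX, hzx⟩ | ⟨hzA, hzx⟩
              · exact ⟨_, List.mem_cons_of_mem _ (List.mem_cons_self),
                  e2L_XX2 hzX hzx⟩
              · by_cases hor : z < y0 ∨ x₁ < z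
                · exact ⟨_, List.mem_cons_of_mem _ (List.mem_cons_self),
                    e2L_AX2 hx₂X hy0Y' hzA hzx hor⟩
                · push_neg at hor
                  exact ⟨_, List.mem_cons_self,
                    e1L_AX2 hx₁X hx₂X hne hy0Y' hzA hor.2 hzx⟩
            · obtain ⟨ℓ, hℓ, hv⟩ := hcx x'
                (Finset.mem_erase.2 ⟨hxx2, Finset.mem_erase.2 ⟨hxx1, hx'⟩⟩) z hz
              exact ⟨ℓ, List.mem_cons_of_mem _ (List.mem_cons_of_mem _ hℓ), hv⟩
          · -- y coverage
            intro y' hy' z hz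
            by_cases hyy : y' = y0
            · subst hyy
              rcases hz with ⟨hzY, hzy⟩ | ⟨hzA, hzy⟩
              · exact ⟨_, List.mem_cons_self, e1L_YY hanti hx₁X hx₂X hy0Y' hzY hzy⟩
              · by_cases h1z : x₁ < z
                · exact ⟨_, List.mem_cons_self,
                    e1L_AY hanti hx₁X hx₂X hy0Y' hzA hzy h1z⟩
                · exact ⟨_, List.mem_cons_of_mem _ (List.mem_cons_self),
                    e2L_AY hanti hx₂X hy0Y' hzA hzy h1z⟩
            · obtain ⟨ℓ, hℓ, hv⟩ := hcy y' (Finset.mem_erase.2 ⟨hyy, hy'⟩) z hz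
              exact ⟨ℓ, List.mem_cons_of_mem _ (List.mem_cons_of_mem _ hℓ), hv⟩
          · intro x' hx' y' hy' hn'
            exact absurd (hinc x' hx' y' hy') hn' 

end Main


section Assemble

variable {β : Type*} [PartialOrder β]

/-- linear order from a level function and an injective key -/
def mkRel (ℓ k : β → ℕ) : β → β → Prop :=
  fun u v => ℓ u < ℓ v ∨ (ℓ u = ℓ v ∧ k u ≤ k v)

lemma mkRel_refl (ℓ k : β → ℕ) (u : β) : mkRel ℓ k u u := Or.inr ⟨rfl, le_rfl⟩

lemma mkRel_trans (ℓ k : β → ℕ) {a b c : β} (h1 : mkRel ℓ k a b) (h2 : mkRel ℓ k b c) :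
    mkRel ℓ k a c := by
  rcases h1 with h1 | ⟨h1, h1'⟩ <;> rcases h2 with h2 | ⟨h2, h2'⟩
  · exact Or.inl (h1.trans h2)
  · exact Or.inl (h2 ▸ h1)
  · exact Or.inl (h1 ▸ h2)
  · exact Or.inr ⟨h1.trans h2, h1'.trans h2'⟩

lemma mkRel_antisymm {ℓ k : β → ℕ} (hk : Function.Injective k) {a b : β}
    (h1 : mkRel ℓ k a b) (h2 : mkRel ℓ k b a) : a = b := by
  rcases h1 with h1 | ⟨h1, h1'⟩ <;> rcases h2 with h2 | ⟨h2, h2'⟩ <;>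
    first
      | omega
      | exact hk (le_antisymm h1' h2')

lemma mkRel_total (ℓ k : β → ℕ) (a b : β) : mkRel ℓ k a b ∨ mkRel ℓ k b a := by
  rcases lt_trichotomy (ℓ a) (ℓ b) with h | h | h
  · exact Or.inl (Or.inl h)
  · rcases le_total (k a) (k b) with h' | h'
    · exact Or.inl (Or.inr ⟨h, h'⟩)
    · exact Or.inr (Or.inr ⟨h.symm, h'⟩)
  · exact Or.inr (Or.inl h)

lemma mkRel_linear {ℓ k : β → ℕ} (hk : Function.Injective k) :
    IsLinearOrder β (mkRel ℓ k) where
  refl := mkRel_refl ℓ k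
  trans := fun _ _ _ => mkRel_trans ℓ k
  antisymm := fun _ _ => mkRel_antisymm hk
  total := mkRel_total ℓ k

lemma mkRel_isExt {ℓ k : β → ℕ} (hk : Function.Injective k) (hm : IsMono ℓ) :
    IsLinearExtension (mkRel ℓ k) := by
  refine ⟨mkRel_linear hk, fun u v huv => ?_⟩
  rcases eq_or_lt_of_le huv with rfl | h
  · exact mkRel_refl ℓ k u
  · exact Or.inl (hm u v h)

lemma mkRel_not_of_lt {ℓ k : β → ℕ} {u v : β} (h : ℓ v < ℓ u) : ¬ mkRel ℓ k u v := by
  intro hc; rcases hc with hc | ⟨hc, -⟩ <;> omega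

lemma mkRel_not_of_key {ℓ k : β → ℕ} {u v : β} (h : ℓ u = ℓ v) (hkk : k v < k u) :
    ¬ mkRel ℓ k u v := by
  intro hc; rcases hc with hc | ⟨-, hc⟩ <;> omega

end Assemble


end Stmt15Aux

open Stmt15Aux in
/-- Let `A` be a maximal antichain in a finite poset `P` which is not an antichain.
If `X = D(A)` and `Y = U(A)` are both antichains, `|X| = s` and `|Y| = s + t`,
then `dim P ≤ 1 + t + ⌈4s/3⌉`. -/
theorem stmt_15 (α : Type*) [PartialOrder α] [Fintype α] (A : Set α)
    (hanti : IsAntichain (· ≤ ·) A)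
    (hmax : ∀ x, x ∉ A → ∃ a ∈ A, x < a ∨ a < x)
    (hnot : ¬ IsAntichain (· ≤ ·) (Set.univ : Set α))
    (s t : ℕ)
    (hX : IsAntichain (· ≤ ·) {x | x ∉ A ∧ ∃ a ∈ A, x < a})
    (hY : IsAntichain (· ≤ ·) {y | y ∉ A ∧ ∃ a ∈ A, a < y})
    (hs : {x | x ∉ A ∧ ∃ a ∈ A, x < a}.ncard = s)
    (ht : {y | y ∉ A ∧ ∃ a ∈ A, a < y}.ncard = s + t) :
    dimP α ≤ 1 + t + (4 * s + 2) / 3 := by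
  classical
  have hX' : IsAntichain (· ≤ ·) (XS A) := hX
  have hY' : IsAntichain (· ≤ ·) (YS A) := hY
  have hXf : (XS A).Finite := Set.toFinite _
  have hYf : (YS A).Finite := Set.toFinite _
  have hXcard : hXf.toFinset.card = s := by
    rw [← hs]; exact (Set.ncard_eq_toFinset_card _ hXf).symm
  have hYcard : hYf.toFinset.card = s + t := by
    rw [← ht]; exact (Set.ncard_eq_toFinset_card _ hYf).symm
  have hst : 1 ≤ s + t := by
    by_contra hc
    push_neg at hc
    have hall : ∀ z : α, z ∈ A := by
      intro z
      rcases tri hanti hmax z with hz | hz | hz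
      · exact hz
      · exfalso
        have hzz : z ∈ hXf.toFinset := hXf.mem_toFinset.2 hz
        have := Finset.card_ne_zero_of_mem hzz
        omega
      · exfalso
        have hzz : z ∈ hYf.toFinset := hYf.mem_toFinset.2 hz
        have := Finset.card_ne_zero_of_mem hzz
        omega
    exact hnot (fun u _ v _ huv hle => hanti (hall u) (hall v) huv hle)
  obtain ⟨L, hlen, hm, hb, ⟨hcx, hcy, hcxy⟩, hne⟩ :=
    main hanti hmax hX' hY' (hXf.toFinset.card + hYf.toFinset.card)
      hXf.toFinset hYf.toFinset le_rfl
      (fun z hz => hXf.mem_toFinset.1 hz) (fun z hz => hYf.mem_toFinset.1 hz)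
      (by omega)
  have hL : L ≠ [] := hne (Finset.card_pos.1 (by omega))
  have hL0 : 0 < L.length := List.length_pos_iff.2 hL
  have hWb : L.length ≤ t + (4 * s + 2) / 3 := by
    rw [hXcard, hYcard] at hlen
    have hW2 : W s (s + t) ≤ t + (4 * s + 2) / 3 := by
      simp only [W]; split_ifs <;> omega
    omega
  set N := 1 + t + (4 * s + 2) / 3 with hN
  have h1N : 1 < N := by
    rcases Nat.eq_zero_or_pos t with rfl | ht1
    · have hs1 : 1 ≤ s := by omega
      have : 2 ≤ (4 * s + 2) / 3 := by omega
      omega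
    · omega
  have h0N : 0 < N := by omega
  set n0 := Fintype.card α with hn0
  set e : α ≃ Fin n0 := Fintype.equivFin α with he
  set ℓs : α → ℕ := L.get ⟨0, hL0⟩ with hls
  have hlsL : ℓs ∈ L := by rw [hls]; exact List.get_mem L ⟨0, hL0⟩
  have hlsB : ∀ u, ℓs u ≤ 10 := hb ℓs hlsL
  set κ : α → ℕ := fun u => (n0 + 1) * (20 - ℓs u) + (e u : ℕ) with hκ
  have hκrev : ∀ u v, ℓs u < ℓs v → κ v < κ u := by
    intro u v h
    have h2 : (e v : ℕ) < n0 + 1 := by have := (e v).isLt; omega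
    calc (n0 + 1) * (20 - ℓs v) + (e v : ℕ)
        < (n0 + 1) * (20 - ℓs v) + (n0 + 1) := by omega
      _ = (n0 + 1) * (20 - ℓs v + 1) := by ring
      _ ≤ (n0 + 1) * (20 - ℓs u) := by
          refine Nat.mul_le_mul_left _ ?_
          have := hlsB u; have := hlsB v; omega
      _ ≤ (n0 + 1) * (20 - ℓs u) + (e u : ℕ) := Nat.le_add_right _ _
  have hκinj : Function.Injective κ := by
    intro u v huv
    have hlev : ℓs u = ℓs v := by
      rcases lt_trichotomy (ℓs u) (ℓs v) with h | h | h
      · have := hκrev u v h; omega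
      · exact h
      · have := hκrev v u h; omega
    have heuv : (e u : ℕ) = (e v : ℕ) := by
      simp only [hκ] at huv
      rw [hlev] at huv
      omega
    exact e.injective (Fin.ext heuv)
  have hκlt : ∀ u, κ u < 21 * (n0 + 1) := by
    intro u
    have h2 : (e u : ℕ) < n0 + 1 := by have := (e u).isLt; omega
    have h3 : (n0 + 1) * (20 - ℓs u) ≤ (n0 + 1) * 20 :=
      Nat.mul_le_mul_left _ (by omega)
    calc κ u = (n0 + 1) * (20 - ℓs u) + (e u : ℕ) := rfl
      _ < (n0 + 1) * 20 + (n0 + 1) := by omega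
      _ = 21 * (n0 + 1) := by ring
  set M := 21 * (n0 + 1) with hM
  set f : Fin N → (α → ℕ) := fun i =>
    if h : (i : ℕ) - 1 < L.length ∧ 1 ≤ (i : ℕ) then L.get ⟨(i : ℕ) - 1, h.1⟩
    else baseL A with hf
  set key : Fin N → (α → ℕ) := fun i u => if (i : ℕ) = 1 then M - κ u else κ u with hkey
  have hkeyinj : ∀ i, Function.Injective (key i) := by
    intro i u v h
    simp only [hkey] at h
    split_ifs at h
    · have := hκlt u; have := hκlt v
      exact hκinj (by omega)
    · exact hκinj h
  have hfm : ∀ i, f i = baseL A ∨ f i ∈ L := by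
    intro i
    simp only [hf]
    split_ifs with h
    · exact Or.inr (List.get_mem _ _)
    · exact Or.inl rfl
  have hfmono : ∀ i, IsMono (f i) := by
    intro i
    rcases hfm i with h | h
    · rw [h]; exact mono_base hanti hmax hX' hY'
    · exact hm _ h
  have hidx : ∀ ℓ ∈ L, ∃ i : Fin N, f i = ℓ := by
    intro ℓ hℓ
    obtain ⟨⟨j, hj⟩, hget⟩ := List.mem_iff_get.1 hℓ
    have hjN : j + 1 < N := by omega
    refine ⟨⟨j + 1, hjN⟩, ?_⟩
    simp only [hf]
    rw [dif_pos ⟨by simpa using hj, by simp⟩]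
    exact hget
  have hf0 : f ⟨0, h0N⟩ = baseL A := by
    simp [hf]
  have hf1 : f ⟨1, h1N⟩ = ℓs := by
    simp only [hf]
    rw [dif_pos ⟨by simpa using hL0, by simp⟩]
  have hbX : ∀ z : α, z ∈ XS A → baseL A z = 0 := by
    intro z hz; simp only [baseL]; rw [if_pos hz]
  have hbA : ∀ z : α, z ∈ A → baseL A z = 1 := by
    intro z hz; simp only [baseL]; rw [if_neg (A_not_X' hz), if_pos hz]
  have hbY : ∀ z : α, z ∈ YS A → baseL A z = 2 := by
    intro z hz; simp only [baseL]
    rw [if_neg (Y_not_X' hanti hz), if_neg (Y_not_A' hz)]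
  have hkey0 : ∀ u, key ⟨0, h0N⟩ u = κ u := by
    intro u; simp [hkey]
  have hkey1 : ∀ u, key ⟨1, h1N⟩ u = M - κ u := by
    intro u; simp [hkey]
  have hreal : RealizerOfSize α N := by
    refine ⟨fun i => mkRel (f i) (key i),
      fun i => mkRel_isExt (hkeyinj i) (hfmono i), ?_⟩
    intro u v
    constructor
    · intro huv i
      rcases eq_or_lt_of_le huv with rfl | h
      · exact mkRel_refl _ _ u
      · exact Or.inl (hfmono i u v h)
    · intro hall
      by_contra hnuv
      have hvu : ¬ v < u := by
        intro hvu
        refine mkRel_not_of_lt (k := key ⟨0, h0N⟩) ?_ (hall ⟨0, h0N⟩)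
        rw [hf0]
        exact mono_base hanti hmax hX' hY' v u hvu
      have hnlt : ¬ u < v := fun h => hnuv h.le
      have hneq : u ≠ v := fun h => hnuv (h ▸ le_rfl)
      have base_not : baseL A v < baseL A u → False := by
        intro h
        refine mkRel_not_of_lt (k := key ⟨0, h0N⟩) ?_ (hall ⟨0, h0N⟩)
        rw [hf0]; exact h
      have mem_not : ∀ ℓ ∈ L, ℓ v < ℓ u → False := by
        intro ℓ hℓ h
        obtain ⟨i, hi⟩ := hidx ℓ hℓ
        exact mkRel_not_of_lt (k := key i) (by rw [hi]; exact h) (hall i)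
      rcases tri hanti hmax u with hu | hu | hu <;>
        rcases tri hanti hmax v with hv | hv | hv
      · -- u, v ∈ A
        rcases lt_or_ge (κ v) (κ u) with hκo | hκo
        · refine mkRel_not_of_key (ℓ := f ⟨0, h0N⟩) ?_ ?_ (hall ⟨0, h0N⟩)
          · rw [hf0, hbA u hu, hbA v hv]
          · rw [hkey0, hkey0]; exact hκo
        · have hκ' : κ u < κ v := lt_of_le_of_ne hκo (fun h => hneq (hκinj h))
          rcases lt_trichotomy (ℓs u) (ℓs v) with h | h | h
          · have := hκrev u v h; omega
          · refine mkRel_not_of_key (ℓ := f ⟨1, h1N⟩) ?_ ?_ (hall ⟨1, h1N⟩)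
            · rw [hf1]; exact h
            · rw [hkey1, hkey1]
              have := hκlt u; have := hκlt v
              omega
          · refine mkRel_not_of_lt (k := key ⟨1, h1N⟩) ?_ (hall ⟨1, h1N⟩)
            rw [hf1]; exact h
      · -- u ∈ A, v ∈ XS : base reverses
        exact base_not (by rw [hbA u hu, hbX v hv]; omega)
      · -- u ∈ A, v ∈ YS
        obtain ⟨ℓ, hℓ, hlt⟩ := hcy v (hYf.mem_toFinset.2 hv) u (Or.inr ⟨hu, hnlt⟩)
        exact mem_not ℓ hℓ hlt
      · -- u ∈ XS, v ∈ A
        obtain ⟨ℓ, hℓ, hlt⟩ := hcx u (hXf.mem_toFinset.2 hu) v (Or.inr ⟨hv, hnlt⟩)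
        exact mem_not ℓ hℓ hlt
      · -- u, v ∈ XS
        obtain ⟨ℓ, hℓ, hlt⟩ := hcx u (hXf.mem_toFinset.2 hu) v (Or.inl ⟨hv, hneq.symm⟩)
        exact mem_not ℓ hℓ hlt
      · -- u ∈ XS, v ∈ YS
        obtain ⟨ℓ, hℓ, hlt⟩ := hcxy u (hXf.mem_toFinset.2 hu) v (hYf.mem_toFinset.2 hv) hnlt
        exact mem_not ℓ hℓ hlt
      · -- u ∈ YS, v ∈ A
        exact base_not (by rw [hbA v hv, hbY u hu]; omega)
      · -- u ∈ YS, v ∈ XS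
        exact base_not (by rw [hbX v hv, hbY u hu]; omega)
      · -- u, v ∈ YS
        obtain ⟨ℓ, hℓ, hlt⟩ := hcy v (hYf.mem_toFinset.2 hv) u (Or.inl ⟨hu, hneq⟩)
        exact mem_not ℓ hℓ hlt
  exact Nat.sInf_le ⟨h0N, hreal⟩
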